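/- Let ε > ε' > 0 and ρ_k > ρ > 1 satisfy ε > ε' + 2ρ⁻¹. Then for every V ∈ 𝒱^ω_{ρ,ε} and T ∈ 𝒯^ω_{ρ_k,ε}, the commutator [V,T] := V⁻¹ ∘ T⁻¹ ∘ V ∘ T satisfies sup_{K_{ρ,ε'}} ‖[V,T] − id‖ ≤ 1/ρ'_k, where ρ'_k := ((ε − ε' − 2ρ⁻¹)/(ε − ε' − ρ⁻¹)) · ρ_k. -/

import Mathlib

noncomputable section

/-- `Q_{ρ,ε} := ([−ρ−ε, −1+ε] ∪ [1−ε, ρ+ε]) + i[−ρ−ε, ρ+ε] ⊂ ℂ`. -/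
def Qset (ρ ε : ℝ) : Set ℂ :=
  {w : ℂ | (w.re ∈ Set.Icc (-ρ - ε) (-1 + ε) ∪ Set.Icc (1 - ε) (ρ + ε)) ∧ |w.im| ≤ ρ + ε}

/-- `K_{ρ,ε} := 𝕋_{ρ+ε} × Q_{ρ,ε}`, viewed in the universal cover `ℂ × ℂ` of `ℂ/ℤ × ℂ`:
the first coordinate ranges over `{z : |Im z| ≤ ρ+ε}` (which covers `𝕋_{ρ+ε}`). -/
def Kset (ρ ε : ℝ) : Set (ℂ × ℂ) :=
  {z : ℂ × ℂ | |z.1.im| ≤ ρ + ε ∧ z.2 ∈ Qset ρ ε}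

/-- The holomorphic extension of a horizontal twist map `(θ,y) ↦ (θ + τ(y), y)`. -/
def TwC (τ : ℂ → ℂ) : ℂ × ℂ → ℂ × ℂ := fun z => (z.1 + τ z.2, z.2)

/-- The holomorphic extension of a vertical twist map `(θ,y) ↦ (θ, y + v(θ))`. -/
def VC (v : ℂ → ℂ) : ℂ × ℂ → ℂ × ℂ := fun z => (z.1, z.2 + v z.1)

open Metric Set

/-- Cauchy-estimate based Lipschitz bound for entire functions. -/
lemma key_lip {f : ℂ → ℂ} (hf : Differentiable ℂ f) (a b : ℂ) {r M : ℝ} (hr : 0 < r)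
    (hM : ∀ w : ℂ, dist w a ≤ dist b a + r → ‖f w‖ ≤ M) :
    ‖f b - f a‖ ≤ M / r * ‖b - a‖ := by
  have hbound : ∀ x ∈ segment ℝ a b, ‖deriv f x‖ ≤ M / r := by
    intro x hx
    have hxa : dist x a ≤ dist b a := by
      have : x ∈ closedBall a (dist b a) :=
        (convex_closedBall a (dist b a)).segment_subset
          (mem_closedBall_self dist_nonneg) (mem_closedBall.2 le_rfl) hx
      simpa [mem_closedBall] using this
    refine Complex.norm_deriv_le_of_forall_mem_sphere_norm_le hr (hf.diffContOnCl) ?_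
    intro z hz
    apply hM
    have hzx : dist z x = r := mem_sphere.mp hz
    calc dist z a ≤ dist z x + dist x a := dist_triangle _ _ _
      _ ≤ r + dist b a := by rw [hzx]; linarith
      _ = dist b a + r := by ring
  exact (convex_segment a b).norm_image_sub_le_of_norm_deriv_le
    (fun x _ => hf.differentiableAt) hbound (left_mem_segment ℝ a b) (right_mem_segment ℝ a b)

lemma mem_Q_of_close {ρ ε' ε ρk : ℝ} (hρk : ρ ≤ ρk) {y w : ℂ}
    (hy : y ∈ Qset ρ ε') (hw : dist w y ≤ ε - ε') : w ∈ Qset ρk ε := by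
  obtain ⟨hyre, hyim⟩ := hy
  have hre : |w.re - y.re| ≤ ε - ε' := by
    have := Complex.abs_re_le_norm (w - y)
    rw [Complex.sub_re] at this
    calc |w.re - y.re| ≤ ‖w - y‖ := this
      _ = dist w y := (Complex.dist_eq w y).symm
      _ ≤ ε - ε' := hw
  have him : |w.im - y.im| ≤ ε - ε' := by
    have := Complex.abs_im_le_norm (w - y)
    rw [Complex.sub_im] at this
    calc |w.im - y.im| ≤ ‖w - y‖ := this
      _ = dist w y := (Complex.dist_eq w y).symm
      _ ≤ ε - ε' := hw
  rw [abs_le] at hre him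
  rw [abs_le] at hyim
  constructor
  · rcases hyre with h | h
    · left; obtain ⟨h1, h2⟩ := h; constructor <;> linarith
    · right; obtain ⟨h1, h2⟩ := h; constructor <;> linarith
  · rw [abs_le]; constructor <;> linarith

/-- Let `ε > ε' > 0` and `ρ_k > ρ > 1` satisfy `ε > ε' + 2ρ⁻¹`. Then for every
`V ∈ 𝒱^ω_{ρ,ε}` (vertical twist whose entire `v` is real on reals, `1`-periodic, of zero mean
and with `sup_{𝕋_{ρ+ε}} |v| < ρ⁻¹`) and every `T ∈ 𝒯^ω_{ρ_k,ε}` (horizontal twist whose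
entire `τ` is real on reals with `sup_{Q_{ρ_k,ε}} |τ| < ρ_k⁻¹`), the commutator
`[V,T] := V⁻¹ ∘ T⁻¹ ∘ V ∘ T` satisfies `sup_{K_{ρ,ε'}} ‖[V,T] − id‖ ≤ 1/ρ'_k`, where
`ρ'_k := ((ε − ε' − 2ρ⁻¹)/(ε − ε' − ρ⁻¹)) · ρ_k`.
(Note `V⁻¹ = VC (−v)` and `T⁻¹ = TwC (−τ)` exactly.) -/
theorem stmt13 (ε ε' ρ ρk : ℝ)
    (hε' : 0 < ε') (hεε' : ε' < ε) (hρ : 1 < ρ) (hρk : ρ < ρk)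
    (hgap : ε' + 2 * ρ⁻¹ < ε)
    (v τ : ℂ → ℂ)
    (hv : Differentiable ℂ v) (hvreal : ∀ x : ℝ, (v x).im = 0)
    (hvper : ∀ z : ℂ, v (z + 1) = v z) (hvmean : (∫ x in (0:ℝ)..1, (v x).re) = 0)
    (hvsup : ∀ z : ℂ, |z.im| ≤ ρ + ε → ‖v z‖ < ρ⁻¹)
    (hτ : Differentiable ℂ τ) (hτreal : ∀ x : ℝ, (τ x).im = 0)
    (hτsup : ∀ w ∈ Qset ρk ε, ‖τ w‖ < ρk⁻¹) :
    ∀ z ∈ Kset ρ ε',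
      ‖(VC (fun w => -v w) ∘ TwC (fun w => -τ w) ∘ VC v ∘ TwC τ) z - z‖
        ≤ ((ε - ε' - 2 * ρ⁻¹) / (ε - ε' - ρ⁻¹) * ρk)⁻¹ := by
  intro z hz
  obtain ⟨hθim, hyQ⟩ := hz
  set θ := z.1 with hθdef
  set y := z.2 with hydef
  -- basic positivity
  have hρ0 : (0:ℝ) < ρ := lt_trans one_pos hρ
  have hρk0 : (0:ℝ) < ρk := lt_trans hρ0 hρk
  have ht0 : (0:ℝ) < ρ⁻¹ := inv_pos.mpr hρ0
  have htk0 : (0:ℝ) < ρk⁻¹ := inv_pos.mpr hρk0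
  have htkt : ρk⁻¹ < ρ⁻¹ := by
    exact inv_strictAnti₀ hρ0 hρk
  have ha2t : 0 < ε - ε' - 2 * ρ⁻¹ := by linarith
  have hat : 0 < ε - ε' - ρ⁻¹ := by linarith
  -- The right-hand side
  have hRHS : ((ε - ε' - 2 * ρ⁻¹) / (ε - ε' - ρ⁻¹) * ρk)⁻¹
      = (ε - ε' - ρ⁻¹) / ((ε - ε' - 2 * ρ⁻¹) * ρk) := by
    field_simp
  set B := (ε - ε' - ρ⁻¹) / ((ε - ε' - 2 * ρ⁻¹) * ρk) with hBdef
  rw [hRHS]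
  -- abbreviations for the orbit
  set A := θ + τ y with hAdef
  set δ := v A with hδdef
  set y1 := y + δ with hy1def
  set θ1 := A + -τ y1 with hθ1def
  -- |Im A| control
  have hτy : ‖τ y‖ ≤ ρk⁻¹ := by
    refine le_of_lt (hτsup y ?_)
    exact mem_Q_of_close (le_of_lt hρk) hyQ (by simp [dist_self]; linarith)
  have hAim : |A.im| ≤ ρ + ε' + ρk⁻¹ := by
    have h1 : |A.im| ≤ |θ.im| + |(τ y).im| := by
      rw [hAdef, Complex.add_im]; exact abs_add_le _ _
    have h2 : |(τ y).im| ≤ ‖τ y‖ := Complex.abs_im_le_norm _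
    linarith
  have hδnorm : ‖δ‖ ≤ ρ⁻¹ := by
    refine le_of_lt (hvsup A ?_)
    linarith
  have hy1y : dist y1 y = ‖δ‖ := by
    rw [hy1def, dist_eq_norm, add_sub_cancel_left]
  -- τ at y1
  have hy1Q : y1 ∈ Qset ρk ε := by
    refine mem_Q_of_close (le_of_lt hρk) hyQ ?_
    rw [hy1y]; linarith
  have hτy1 : ‖τ y1‖ ≤ ρk⁻¹ := le_of_lt (hτsup y1 hy1Q)
  -- first coordinate bound
  have h1 : ‖τ y1 - τ y‖ ≤ ρk⁻¹ / (ε - ε' - ρ⁻¹) * ‖y1 - y‖ := by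
    refine key_lip hτ y y1 hat ?_
    intro w hw
    refine le_of_lt (hτsup w (mem_Q_of_close (le_of_lt hρk) hyQ ?_))
    rw [hy1y] at hw
    linarith
  have h1' : ‖τ y1 - τ y‖ ≤ B := by
    have hnorm : ‖y1 - y‖ ≤ ρ⁻¹ := by rw [← dist_eq_norm, hy1y]; exact hδnorm
    have step : ρk⁻¹ / (ε - ε' - ρ⁻¹) * ‖y1 - y‖ ≤ ρk⁻¹ / (ε - ε' - ρ⁻¹) * ρ⁻¹ :=
      mul_le_mul_of_nonneg_left hnorm (by positivity)
    have halg : ρk⁻¹ / (ε - ε' - ρ⁻¹) * ρ⁻¹ ≤ B := by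
      rw [hBdef, div_mul_eq_mul_div, div_le_div_iff₀ hat (by positivity)]
      have hc : ρk⁻¹ * ρ⁻¹ * ((ε - ε' - 2 * ρ⁻¹) * ρk) = (ε - ε' - 2 * ρ⁻¹) * ρ⁻¹ := by
        field_simp
      rw [hc]
      nlinarith [sq_nonneg (2*(ε - ε') - 3*ρ⁻¹), sq_nonneg ρ⁻¹]
    linarith
  -- second coordinate bound
  have hθ1A : dist θ1 A = ‖τ y1‖ := by
    rw [hθ1def, dist_eq_norm, add_sub_cancel_left, norm_neg]
  have h2 : ‖v θ1 - v A‖ ≤ ρ⁻¹ / (ε - ε' - 2 * ρ⁻¹) * ‖θ1 - A‖ := by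
    refine key_lip hv A θ1 ha2t ?_
    intro w hw
    refine le_of_lt (hvsup w ?_)
    have hwim : |w.im - A.im| ≤ dist w A := by
      have := Complex.abs_im_le_norm (w - A)
      rw [Complex.sub_im] at this
      calc |w.im - A.im| ≤ ‖w - A‖ := this
        _ = dist w A := (Complex.dist_eq _ _).symm
    rw [hθ1A] at hw
    have : |w.im| ≤ |A.im| + dist w A := by
      have := abs_sub_abs_le_abs_sub w.im A.im
      linarith [abs_sub_abs_le_abs_sub w.im A.im, hwim]
    linarith
  have h2' : ‖v θ1 - v A‖ ≤ B := by
    have hnorm : ‖θ1 - A‖ ≤ ρk⁻¹ := by rw [← dist_eq_norm, hθ1A]; exact hτy1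
    have step : ρ⁻¹ / (ε - ε' - 2 * ρ⁻¹) * ‖θ1 - A‖ ≤ ρ⁻¹ / (ε - ε' - 2 * ρ⁻¹) * ρk⁻¹ :=
      mul_le_mul_of_nonneg_left hnorm (by positivity)
    have halg : ρ⁻¹ / (ε - ε' - 2 * ρ⁻¹) * ρk⁻¹ ≤ B := by
      rw [hBdef, div_mul_eq_mul_div, div_le_div_iff₀ ha2t (by positivity)]
      have hc : ρ⁻¹ * ρk⁻¹ * ((ε - ε' - 2 * ρ⁻¹) * ρk) = (ε - ε' - 2 * ρ⁻¹) * ρ⁻¹ := by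
        field_simp
      rw [hc]
      nlinarith
    linarith
  -- assemble
  have hcomp : (VC (fun w => -v w) ∘ TwC (fun w => -τ w) ∘ VC v ∘ TwC τ) z - z
      = (τ y - τ y1, v A - v θ1) := by
    simp only [VC, TwC, Function.comp, Prod.mk_sub_mk, Prod.mk.injEq,
      hθ1def, hy1def, hδdef, hAdef, hθdef, hydef]
    rw [Prod.ext_iff]
    constructor <;> simp only [Prod.fst_sub, Prod.snd_sub] <;> ring
  rw [hcomp, Prod.norm_def]
  apply max_le
  · simpa [norm_sub_rev] using h1'
  · simpa [norm_sub_rev] using h2'
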